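/- arXiv:2603.06592 — 3 statements merged into one kernel-verified Lean document; each statement's English description precedes it below -/
import Mathlib

section
/- Let Z and X be random variables taking values in standard Borel spaces, and let T(x) := P(Z ∈ · | X = x) be the regular conditional distribution of Z given X, viewed as a measurable map from the values of X to the space of probability measures on Z. Then T(X) is a sufficient statistic for Z: the conditional distribution of Z given both X and T(X) equals the conditional distribution of Z given T(X) alone, i.e., P(Z ∈ A | X, T(X)) = P(Z ∈ A | T(X)) almost surely for every measurable set A. -/
open MeasureTheory ProbabilityTheory

/-- **Sufficiency of the posterior map.**
Let `Z` and `X` be random variables taking values in standard Borel spaces, and let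
`T x := P(Z ∈ · | X = x)` be the regular conditional distribution of `Z` given `X`
(realized in Mathlib as `condDistrib Z X μ`), viewed as a measurable map into the space
of (probability) measures on the target of `Z`. Then `T(X)` is a sufficient statistic for
`Z`: for every measurable set `A`, the conditional probability of `{Z ∈ A}` given the
σ-algebra generated by `(X, T(X))` coincides (a.s.) with the one given `T(X)` alone. -/
theorem posterior_is_sufficient
    {Ω 𝒳 𝒵 : Type*} [MeasurableSpace Ω]
    [MeasurableSpace 𝒳] [StandardBorelSpace 𝒳]
    [MeasurableSpace 𝒵] [StandardBorelSpace 𝒵] [Nonempty 𝒵]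
    (μ : Measure Ω) [IsProbabilityMeasure μ]
    (X : Ω → 𝒳) (Z : Ω → 𝒵) (hX : Measurable X) (hZ : Measurable Z)
    (T : 𝒳 → Measure 𝒵) (hT : ∀ x, T x = condDistrib Z X μ x)
    (A : Set 𝒵) (hA : MeasurableSet A) :
    μ⟦Z ⁻¹' A | MeasurableSpace.comap (fun ω => (X ω, T (X ω))) inferInstance⟧
      =ᵐ[μ] μ⟦Z ⁻¹' A | MeasurableSpace.comap (fun ω => T (X ω)) inferInstance⟧ := by
  have hTmeas : Measurable T := by
    have : T = fun x => condDistrib Z X μ x := funext hT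
    rw [this]
    exact (condDistrib Z X μ).measurable
  have hm2_eq : MeasurableSpace.comap (fun ω => (X ω, T (X ω)))
      (inferInstance : MeasurableSpace (𝒳 × Measure 𝒵))
      = MeasurableSpace.comap X inferInstance := by
    apply le_antisymm
    · have h : (fun ω => (X ω, T (X ω))) = (fun x => (x, T x)) ∘ X := rfl
      rw [h, ← MeasurableSpace.comap_comp]
      exact MeasurableSpace.comap_mono (measurable_id.prodMk hTmeas).comap_le
    · have h : X = Prod.fst ∘ (fun ω => (X ω, T (X ω))) := rfl
      rw [h, ← MeasurableSpace.comap_comp]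
      exact MeasurableSpace.comap_mono measurable_fst.comap_le
  have hm1_le_mX : MeasurableSpace.comap (fun ω => T (X ω))
        (inferInstance : MeasurableSpace (Measure 𝒵))
      ≤ MeasurableSpace.comap X inferInstance := by
    rw [← hm2_eq]
    have h : (fun ω => T (X ω)) = Prod.snd ∘ (fun ω => (X ω, T (X ω))) := rfl
    rw [h, ← MeasurableSpace.comap_comp]
    exact MeasurableSpace.comap_mono measurable_snd.comap_le
  have hm1_le : MeasurableSpace.comap (fun ω => T (X ω))
        (inferInstance : MeasurableSpace (Measure 𝒵))
      ≤ (by infer_instance : MeasurableSpace Ω) := (hTmeas.comp hX).comap_le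
  have hmX_le : MeasurableSpace.comap X (inferInstance : MeasurableSpace 𝒳)
      ≤ (by infer_instance : MeasurableSpace Ω) := hX.comap_le
  -- the candidate function
  have hf_eq : (fun ω => ((T (X ω)) A).toReal)
      = fun ω => (condDistrib Z X μ (X ω) A).toReal := by
    funext ω
    rw [hT]
  have hf_sm : StronglyMeasurable[MeasurableSpace.comap (fun ω => T (X ω)) inferInstance]
      (fun ω => ((T (X ω)) A).toReal) := by
    have h1 : Measurable[MeasurableSpace.comap (fun ω => T (X ω)) inferInstance]
        (fun ω => T (X ω)) := Measurable.of_comap_le le_rfl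
    have h2 : Measurable (fun ν : Measure 𝒵 => ν A) := Measure.measurable_coe hA
    exact ((ENNReal.measurable_toReal.comp h2).comp h1).stronglyMeasurable
  have hf_int : Integrable (fun ω => ((T (X ω)) A).toReal) μ := by
    rw [hf_eq]
    exact integrable_toReal_condDistrib hX.aemeasurable hA
  have hcd : (fun ω => ((T (X ω)) A).toReal)
      =ᵐ[μ] μ⟦Z ⁻¹' A | MeasurableSpace.comap X inferInstance⟧ := by
    rw [hf_eq]; exact condDistrib_ae_eq_condExp hX hZ hA
  have hLHS : μ⟦Z ⁻¹' A | MeasurableSpace.comap (fun ω => (X ω, T (X ω))) inferInstance⟧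
      =ᵐ[μ] (fun ω => ((T (X ω)) A).toReal) := by
    rw [hm2_eq]; exact hcd.symm
  have hRHS : μ⟦Z ⁻¹' A | MeasurableSpace.comap (fun ω => T (X ω)) inferInstance⟧
      =ᵐ[μ] (fun ω => ((T (X ω)) A).toReal) := by
    have htower := condExp_condExp_of_le (f := (Z ⁻¹' A).indicator (fun _ => (1 : ℝ)))
      (μ := μ) hm1_le_mX hmX_le
    have h1 : μ[μ⟦Z ⁻¹' A | MeasurableSpace.comap X inferInstance⟧ |
          MeasurableSpace.comap (fun ω => T (X ω)) inferInstance]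
        =ᵐ[μ] μ[(fun ω => ((T (X ω)) A).toReal) |
          MeasurableSpace.comap (fun ω => T (X ω)) inferInstance] :=
      condExp_congr_ae hcd.symm
    have h2 : μ[(fun ω => ((T (X ω)) A).toReal) |
          MeasurableSpace.comap (fun ω => T (X ω)) inferInstance]
        = fun ω => ((T (X ω)) A).toReal :=
      condExp_of_stronglyMeasurable hm1_le hf_sm hf_int
    calc μ⟦Z ⁻¹' A | MeasurableSpace.comap (fun ω => T (X ω)) inferInstance⟧
        =ᵐ[μ] _ := htower.symm
      _ =ᵐ[μ] _ := h1
      _ = _ := h2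
  exact hLHS.trans hRHS.symm
end

section
/- If T(x) := P(Z ∈ · | X = x) is the regular conditional distribution of Z given X, then I(Z; T(X)) = I(Z; X), i.e., the posterior map achieves equality in the data processing inequality. -/
open MeasureTheory ProbabilityTheory
open scoped Classical

/-- Kullback–Leibler divergence `D(μ ‖ ν)`, valued in `EReal` (equal to `⊤` when `μ` is not
absolutely continuous w.r.t. `ν` or when the log-likelihood ratio is not integrable). -/

noncomputable def klDiv {α : Type*} [MeasurableSpace α] (μ ν : Measure α) : EReal :=
  if μ ≪ ν ∧ Integrable (fun x => Real.log ((μ.rnDeriv ν x).toReal)) μ then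
    ((∫ x, Real.log ((μ.rnDeriv ν x).toReal) ∂μ : ℝ) : EReal)
  else ⊤

/-- Mutual information `I(A; B)`: the KL divergence of the joint law of `(A, B)`
from the product of its marginals. -/
noncomputable def mutualInfo {Ω α β : Type*} [MeasurableSpace Ω] [MeasurableSpace α]
    [MeasurableSpace β] (μ : Measure Ω) (A : Ω → α) (B : Ω → β) : EReal :=
  klDiv (μ.map (fun ω => (A ω, B ω))) ((μ.map A).prod (μ.map B))

open scoped ENNReal

lemma klDiv_eq_top_of_not_ac {α : Type*} [MeasurableSpace α] {μ ν : Measure α}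
    (h : ¬ μ ≪ ν) : klDiv μ ν = ⊤ := by
  rw [klDiv, if_neg]; tauto

lemma klDiv_eq_of_rnDeriv_map {α β : Type*} [MeasurableSpace α] [MeasurableSpace β]
    (μ ν : Measure α) (μ' ν' : Measure β) (f : α → β) (hf : Measurable f)
    (hμ' : μ' = μ.map f) (hAC : μ ≪ ν) (hAC' : μ' ≪ ν')
    (hRN : (fun a => μ'.rnDeriv ν' (f a)) =ᵐ[μ] μ.rnDeriv ν) :
    klDiv μ' ν' = klDiv μ ν := by
  have hmeas : Measurable (fun y => Real.log ((μ'.rnDeriv ν' y).toReal)) :=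
    Real.measurable_log.comp (Measure.measurable_rnDeriv μ' ν').ennreal_toReal
  have hae : (fun a => Real.log ((μ'.rnDeriv ν' (f a)).toReal))
      =ᵐ[μ] (fun a => Real.log ((μ.rnDeriv ν a).toReal)) := by
    filter_upwards [hRN] with a ha; rw [ha]
  have hint_iff : Integrable (fun y => Real.log ((μ'.rnDeriv ν' y).toReal)) μ' ↔
      Integrable (fun x => Real.log ((μ.rnDeriv ν x).toReal)) μ := by
    have h1 : Integrable (fun y => Real.log ((μ'.rnDeriv ν' y).toReal)) (μ.map f) ↔
        Integrable ((fun y => Real.log ((μ'.rnDeriv ν' y).toReal)) ∘ f) μ :=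
      integrable_map_measure hmeas.aestronglyMeasurable hf.aemeasurable
    rw [← hμ'] at h1
    rw [h1]
    exact integrable_congr hae
  have hint_eq : (∫ y, Real.log ((μ'.rnDeriv ν' y).toReal) ∂μ')
      = ∫ x, Real.log ((μ.rnDeriv ν x).toReal) ∂μ := by
    have h1 : (∫ y, Real.log ((μ'.rnDeriv ν' y).toReal) ∂(μ.map f))
        = ∫ a, Real.log ((μ'.rnDeriv ν' (f a)).toReal) ∂μ :=
      integral_map hf.aemeasurable hmeas.aestronglyMeasurable
    rw [← hμ'] at h1
    rw [h1]
    exact integral_congr_ae hae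
  by_cases hInt : Integrable (fun x => Real.log ((μ.rnDeriv ν x).toReal)) μ
  · rw [klDiv, klDiv, if_pos ⟨hAC', hint_iff.mpr hInt⟩, if_pos ⟨hAC, hInt⟩, hint_eq]
  · rw [klDiv, klDiv, if_neg (fun h => hInt (hint_iff.mp h.2)), if_neg (by tauto)]

lemma klDiv_map_equiv {α β : Type*} [MeasurableSpace α] [MeasurableSpace β]
    (e : α ≃ᵐ β) (μ ν : Measure α) [IsFiniteMeasure μ] [IsFiniteMeasure ν] :
    klDiv (μ.map e) (ν.map e) = klDiv μ ν := by
  by_cases hAC : μ ≪ ν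
  · refine klDiv_eq_of_rnDeriv_map μ ν (μ.map e) (ν.map e) e e.measurable rfl hAC
      (e.measurableEmbedding.absolutelyContinuous_map hAC) ?_
    exact hAC.ae_le (e.measurableEmbedding.rnDeriv_map μ ν)
  · rw [klDiv_eq_top_of_not_ac hAC, klDiv_eq_top_of_not_ac]
    intro h
    refine absurd (Measure.AbsolutelyContinuous.mk fun s hs hνs => ?_) hAC
    have h1 : ν.map e (e.symm ⁻¹' s) = 0 := by
      rw [Measure.map_apply e.measurable (e.symm.measurable hs)]
      rw [show e ⁻¹' (e.symm ⁻¹' s) = s by ext x; simp]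
      exact hνs
    have h2 := h h1
    rw [Measure.map_apply e.measurable (e.symm.measurable hs)] at h2
    rwa [show e ⁻¹' (e.symm ⁻¹' s) = s by ext x; simp] at h2

lemma withDensity_comp_map {α β : Type*} [MeasurableSpace α] [MeasurableSpace β]
    (ν : Measure α) {f : α → β} (hf : Measurable f) {g : β → ℝ≥0∞} (hg : Measurable g) :
    (ν.withDensity (fun a => g (f a))).map f = (ν.map f).withDensity g := by
  ext s hs
  rw [Measure.map_apply hf hs, withDensity_apply _ (hf hs), withDensity_apply _ hs,
    setLIntegral_map hs hg hf]

lemma klDiv_map_withDensity {α β : Type*} [MeasurableSpace α] [MeasurableSpace β]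
    (ν : Measure α) [IsFiniteMeasure ν] {f : α → β} (hf : Measurable f)
    {g : β → ℝ≥0∞} (hg : Measurable g) :
    klDiv ((ν.withDensity (fun a => g (f a))).map f) (ν.map f)
      = klDiv (ν.withDensity (fun a => g (f a))) ν := by
  have hfin : IsFiniteMeasure (ν.map f) := by
    constructor
    rw [Measure.map_apply hf MeasurableSet.univ]
    exact measure_lt_top _ _
  set μ := ν.withDensity (fun a => g (f a)) with hμ
  have hAC : μ ≪ ν := withDensity_absolutelyContinuous _ _
  have hmap : μ.map f = (ν.map f).withDensity g := withDensity_comp_map ν hf hg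
  have hAC' : μ.map f ≪ ν.map f := by
    rw [hmap]; exact withDensity_absolutelyContinuous _ _
  refine klDiv_eq_of_rnDeriv_map μ ν (μ.map f) (ν.map f) f hf rfl hAC hAC' ?_
  have h1 : (μ.map f).rnDeriv (ν.map f) =ᵐ[ν.map f] g := by
    rw [hmap]; exact Measure.rnDeriv_withDensity (ν.map f) hg
  have h2 : (fun a => (μ.map f).rnDeriv (ν.map f) (f a)) =ᵐ[ν] (fun a => g (f a)) :=
    ae_of_ae_map hf.aemeasurable h1
  have h3 : μ.rnDeriv ν =ᵐ[ν] (fun a => g (f a)) :=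
    Measure.rnDeriv_withDensity ν (hg.comp hf)
  exact hAC.ae_le (h2.trans h3.symm)


section evalKernel

variable {𝒵 : Type*} [MeasurableSpace 𝒵]

/-- Evaluation kernel on the space of measures, truncated to stay finite. -/
noncomputable def evalKernel : Kernel (Measure 𝒵) 𝒵 where
  toFun := Set.piecewise {t : Measure 𝒵 | t Set.univ ≤ 1} id 0
  measurable' := Measurable.piecewise
    (measurableSet_le (Measure.measurable_coe MeasurableSet.univ) measurable_const)
    measurable_id measurable_const

lemma evalKernel_apply_of_le {t : Measure 𝒵} (h : t Set.univ ≤ 1) : evalKernel t = t := by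
  simp [evalKernel, Set.piecewise, h, Kernel.coe_mk]

instance : IsFiniteKernel (evalKernel (𝒵 := 𝒵)) := by
  refine ⟨⟨1, ENNReal.one_lt_top, fun t => ?_⟩⟩
  by_cases h : t Set.univ ≤ 1
  · rw [evalKernel_apply_of_le h]; exact h
  · simp only [evalKernel, Kernel.coe_mk, Set.piecewise]
    rw [if_neg (by simpa using h)]
    simp

end evalKernel

section comap

variable {α A β : Type*} [MeasurableSpace α] [MeasurableSpace A] [MeasurableSpace β]

lemma map_prodMap_compProd_comap (μ : Measure α) [SFinite μ] {f : α → A} (hf : Measurable f)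
    (ξ : Kernel A β) [IsSFiniteKernel ξ] :
    (μ ⊗ₘ ξ.comap f hf).map (Prod.map f id) = (μ.map f) ⊗ₘ ξ := by
  have hsf : SFinite (μ.map f) := inferInstance
  ext s hs
  rw [Measure.map_apply (hf.prodMap measurable_id) hs, Measure.compProd_apply hs,
    Measure.compProd_apply ((hf.prodMap measurable_id) hs),
    lintegral_map (Kernel.measurable_kernel_prodMk_left hs) hf]
  rfl

end comap

section dec

variable {α 𝒵 : Type*} [MeasurableSpace α] [MeasurableSpace 𝒵]
  [MeasurableSpace.CountablyGenerated 𝒵]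
  (P : Measure 𝒵) [IsFiniteMeasure P]
  (μ : Measure α) [SFinite μ] {f : α → Measure 𝒵} (hf : Measurable f)

lemma compProd_comap_eval_eq :
    μ ⊗ₘ ((evalKernel (𝒵 := 𝒵)).comap f hf) =
      (μ.prod P).withDensity
          (fun p => Kernel.rnDeriv evalKernel (Kernel.const (Measure 𝒵) P) (f p.1) p.2)
        + μ ⊗ₘ ((Kernel.singularPart evalKernel (Kernel.const (Measure 𝒵) P)).comap f hf) := by
  have hdec := Kernel.rnDeriv_add_singularPart (evalKernel (𝒵 := 𝒵)) (Kernel.const (Measure 𝒵) P)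
  have hgm : Measurable (Function.uncurry
      (Kernel.rnDeriv (evalKernel (𝒵 := 𝒵)) (Kernel.const (Measure 𝒵) P))) :=
    Kernel.measurable_rnDeriv _ _
  have hDm : Measurable (fun p : α × 𝒵 =>
      Kernel.rnDeriv evalKernel (Kernel.const (Measure 𝒵) P) (f p.1) p.2) :=
    hgm.comp ((hf.comp measurable_fst).prodMk measurable_snd)
  have hcomap : (evalKernel (𝒵 := 𝒵)).comap f hf
      = (Kernel.withDensity (Kernel.const (Measure 𝒵) P)
          (Kernel.rnDeriv evalKernel (Kernel.const (Measure 𝒵) P))).comap f hf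
        + (Kernel.singularPart evalKernel (Kernel.const (Measure 𝒵) P)).comap f hf := by
    ext a : 1
    rw [Kernel.comap_apply, ← DFunLike.congr_fun hdec (f a)]
    simp [Kernel.comap_apply]
  rw [hcomap, Measure.compProd_add_right]
  congr 1
  ext s hs
  have hRHS : ((μ.prod P).withDensity (fun p : α × 𝒵 =>
      Kernel.rnDeriv evalKernel (Kernel.const (Measure 𝒵) P) (f p.1) p.2)) s
      = ∫⁻ a, ∫⁻ z in Prod.mk a ⁻¹' s,
          Kernel.rnDeriv evalKernel (Kernel.const (Measure 𝒵) P) (f a) z ∂P ∂μ := by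
    rw [withDensity_apply _ hs, ← lintegral_indicator hs _,
      lintegral_prod _ (hDm.indicator hs).aemeasurable]
    refine lintegral_congr fun a => ?_
    rw [show (fun z => s.indicator (fun p : α × 𝒵 =>
        Kernel.rnDeriv evalKernel (Kernel.const (Measure 𝒵) P) (f p.1) p.2) (a, z))
      = (Prod.mk a ⁻¹' s).indicator
          (fun z => Kernel.rnDeriv evalKernel (Kernel.const (Measure 𝒵) P) (f a) z) by
        ext z; simp [Set.indicator]]
    rw [lintegral_indicator (measurable_prodMk_left hs) _]
  rw [Measure.compProd_apply hs, hRHS]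
  refine lintegral_congr fun a => ?_
  rw [Kernel.comap_apply, Kernel.withDensity_apply' _ hgm, Kernel.const_apply]

lemma singularPart_comap_mutuallySingular :
    (μ ⊗ₘ ((Kernel.singularPart (evalKernel (𝒵 := 𝒵))
        (Kernel.const (Measure 𝒵) P)).comap f hf)) ⟂ₘ (μ.prod P) := by
  have hMS : MeasurableSet (Kernel.mutuallySingularSet (evalKernel (𝒵 := 𝒵))
      (Kernel.const (Measure 𝒵) P)) := Kernel.measurableSet_mutuallySingularSet _ _
  set s : Set (α × 𝒵) := (Prod.map f id) ⁻¹'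
    Kernel.mutuallySingularSet (evalKernel (𝒵 := 𝒵)) (Kernel.const (Measure 𝒵) P) with hs_def
  have hsm : MeasurableSet s := (hf.prodMap measurable_id) hMS
  refine ⟨sᶜ, hsm.compl, ?_, ?_⟩
  · rw [Measure.compProd_apply hsm.compl]
    have : ∀ a, (Kernel.singularPart (evalKernel (𝒵 := 𝒵)) (Kernel.const (Measure 𝒵) P))
        (f a) ((Prod.mk a ⁻¹' s)ᶜ) = 0 := by
      intro a
      refine measure_mono_null ?_
        (Kernel.singularPart_compl_mutuallySingularSetSlice (evalKernel (𝒵 := 𝒵))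
          (Kernel.const (Measure 𝒵) P) (f a))
      intro z hz
      exact hz
    simp [Kernel.comap_apply, this]
  · rw [compl_compl, Measure.prod_apply hsm]
    have : ∀ a, P (Prod.mk a ⁻¹' s) = 0 := by
      intro a
      have h0 := Kernel.measure_mutuallySingularSetSlice (evalKernel (𝒵 := 𝒵))
        (Kernel.const (Measure 𝒵) P) (f a)
      rw [Kernel.const_apply] at h0
      refine measure_mono_null ?_ h0
      intro z hz
      exact hz
    simp [this]

end dec

lemma not_absolutelyContinuous_of_add {α : Type*} [MeasurableSpace α]
    {μ ν ρ σ : Measure α} (h : μ = ρ + σ) (hσν : σ ⟂ₘ ν) (hσ : σ ≠ 0) : ¬ μ ≪ ν := by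
  obtain ⟨u, hu, hσu, hνu⟩ := hσν
  intro hAC
  have h1 : μ uᶜ = 0 := hAC hνu
  rw [h, Measure.add_apply, add_eq_zero] at h1
  have h2 : σ Set.univ = 0 := by
    have := measure_union_le (μ := σ) u uᶜ
    rw [Set.union_compl_self, hσu, h1.2, add_zero] at this
    exact le_antisymm this zero_le
  exact hσ (Measure.measure_univ_eq_zero.mp h2)

lemma mutualInfo_comm {Ω' α β : Type*} [MeasurableSpace Ω'] [MeasurableSpace α]
    [MeasurableSpace β] (μ : Measure Ω') [IsProbabilityMeasure μ] {A : Ω' → α} {B : Ω' → β}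
    (hA : Measurable A) (hB : Measurable B) :
    mutualInfo μ A B
      = klDiv (μ.map (fun ω => (B ω, A ω))) ((μ.map B).prod (μ.map A)) := by
  rw [mutualInfo]
  haveI : IsProbabilityMeasure (μ.map (fun ω => (B ω, A ω))) :=
    Measure.isProbabilityMeasure_map (hB.prodMk hA).aemeasurable
  haveI : IsProbabilityMeasure (μ.map A) := Measure.isProbabilityMeasure_map hA.aemeasurable
  haveI : IsProbabilityMeasure (μ.map B) := Measure.isProbabilityMeasure_map hB.aemeasurable
  have h1 : μ.map (fun ω => (A ω, B ω))
      = (μ.map (fun ω => (B ω, A ω))).map (MeasurableEquiv.prodComm : β × α ≃ᵐ α × β) := by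
    rw [Measure.map_map (MeasurableEquiv.measurable _) (hB.prodMk hA)]
    rfl
  have h2 : (μ.map A).prod (μ.map B)
      = ((μ.map B).prod (μ.map A)).map (MeasurableEquiv.prodComm : β × α ≃ᵐ α × β) := by
    rw [show ⇑(MeasurableEquiv.prodComm : β × α ≃ᵐ α × β) = Prod.swap from rfl,
      Measure.prod_swap]
  rw [h1, h2, klDiv_map_equiv]

/-- **The posterior map achieves equality in the data processing inequality.**
If `T x := P(Z ∈ · | X = x)` is the regular conditional distribution of `Z` given `X`
(Mathlib's `condDistrib Z X μ`), viewed as a map into the space of measures on the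
target of `Z`, then `I(Z; T(X)) = I(Z; X)`. -/
theorem mutualInfo_posterior_eq
    {Ω 𝒳 𝒵 : Type*} [MeasurableSpace Ω]
    [MeasurableSpace 𝒳] [StandardBorelSpace 𝒳]
    [MeasurableSpace 𝒵] [StandardBorelSpace 𝒵] [Nonempty 𝒵]
    (μ : Measure Ω) [IsProbabilityMeasure μ]
    (X : Ω → 𝒳) (Z : Ω → 𝒵) (hX : Measurable X) (hZ : Measurable Z)
    (T : 𝒳 → Measure 𝒵) (hT : ∀ x, T x = condDistrib Z X μ x) :
    mutualInfo μ Z (fun ω => T (X ω)) = mutualInfo μ Z X := by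
  classical
  have hTm : Measurable T := by
    have h : T = fun x => condDistrib Z X μ x := funext hT
    rw [h]; exact (condDistrib Z X μ).measurable
  have hTXm : Measurable (fun ω => T (X ω)) := hTm.comp hX
  haveI hPX : IsProbabilityMeasure (μ.map X) := Measure.isProbabilityMeasure_map hX.aemeasurable
  haveI hPZ : IsProbabilityMeasure (μ.map Z) := Measure.isProbabilityMeasure_map hZ.aemeasurable
  haveI hPT : IsProbabilityMeasure (μ.map (fun ω => T (X ω))) :=
    Measure.isProbabilityMeasure_map hTXm.aemeasurable
  haveI : IsProbabilityMeasure (μ.map (fun ω => (X ω, Z ω))) :=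
    Measure.isProbabilityMeasure_map (hX.prodMk hZ).aemeasurable
  -- swap both mutual informations
  rw [mutualInfo_comm μ hZ hTXm, mutualInfo_comm μ hZ hX]
  -- the conditional distribution kernel and the joint law
  have hjoint : (μ.map X) ⊗ₘ condDistrib Z X μ = μ.map (fun ω => (X ω, Z ω)) := by
    rw [condDistrib, ← Measure.fst_map_prodMk hZ]
    exact Measure.disintegrate _ _
  -- express the kernel through the evaluation kernel
  have hκE : condDistrib Z X μ = (evalKernel (𝒵 := 𝒵)).comap T hTm := by
    ext x : 1
    rw [Kernel.comap_apply]
    have : IsProbabilityMeasure (T x) := by rw [hT x]; infer_instance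
    rw [evalKernel_apply_of_le (by rw [measure_univ])]
    exact (hT x).symm
  -- notation
  set PZ := μ.map Z with hPZdef
  set ν' := (μ.map X).map T with hν'def
  haveI : IsProbabilityMeasure ν' := Measure.isProbabilityMeasure_map hTm.aemeasurable
  set W : Measure (𝒳 × 𝒵) := (μ.map X).prod PZ with hWdef
  set W' : Measure (Measure 𝒵 × 𝒵) := ν'.prod PZ with hW'def
  set D : 𝒳 × 𝒵 → ℝ≥0∞ :=
    fun p => Kernel.rnDeriv evalKernel (Kernel.const (Measure 𝒵) PZ) (T p.1) p.2 with hDdef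
  set G : Measure 𝒵 × 𝒵 → ℝ≥0∞ :=
    fun p => Kernel.rnDeriv evalKernel (Kernel.const (Measure 𝒵) PZ) p.1 p.2 with hGdef
  set σX : Measure (𝒳 × 𝒵) := (μ.map X) ⊗ₘ
    ((Kernel.singularPart evalKernel (Kernel.const (Measure 𝒵) PZ)).comap T hTm) with hσXdef
  set σT : Measure (Measure 𝒵 × 𝒵) := ν' ⊗ₘ
    (Kernel.singularPart evalKernel (Kernel.const (Measure 𝒵) PZ)) with hσTdef
  -- map of the marginal
  have hmapν' : μ.map (fun ω => T (X ω)) = ν' := by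
    rw [hν'def, Measure.map_map hTm hX]
    rfl
  -- decomposition of the joint law of (X, Z)
  have hdecX : μ.map (fun ω => (X ω, Z ω)) = W.withDensity D + σX := by
    rw [← hjoint, hκE]
    exact compProd_comap_eval_eq PZ (μ.map X) hTm
  -- joint law of (T ∘ X, Z)
  have hmapJoint : (μ.map (fun ω => (X ω, Z ω))).map (Prod.map T id)
      = μ.map (fun ω => (T (X ω), Z ω)) := by
    rw [Measure.map_map (hTm.prodMap measurable_id) (hX.prodMk hZ)]
    rfl
  have hjointT : μ.map (fun ω => (T (X ω), Z ω)) = ν' ⊗ₘ evalKernel := by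
    rw [← hmapJoint, ← hjoint, hκE]
    exact map_prodMap_compProd_comap (μ.map X) hTm evalKernel
  have hdecT : μ.map (fun ω => (T (X ω), Z ω)) = W'.withDensity G + σT := by
    rw [hjointT, ← Kernel.comap_id (evalKernel (𝒵 := 𝒵))]
    have h := compProd_comap_eval_eq PZ ν' (measurable_id (α := Measure 𝒵))
    rw [h, Kernel.comap_id]
    rfl
  -- mutual singularity
  have hsingX : σX ⟂ₘ W := singularPart_comap_mutuallySingular PZ (μ.map X) hTm
  have hsingT : σT ⟂ₘ W' := by
    have h := singularPart_comap_mutuallySingular PZ ν' (measurable_id (α := Measure 𝒵))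
    rwa [Kernel.comap_id] at h
  -- σT is the image of σX
  have hσmap : σX.map (Prod.map T id) = σT := by
    rw [hσXdef, hσTdef]
    exact map_prodMap_compProd_comap (μ.map X) hTm _
  have hmass : σX Set.univ = σT Set.univ := by
    rw [← hσmap, Measure.map_apply (hTm.prodMap measurable_id) MeasurableSet.univ,
      Set.preimage_univ]
  rw [hmapν', ← hW'def]
  by_cases hσ : σX = 0
  · -- absolutely continuous case
    have hσT0 : σT = 0 := by rw [← hσmap, hσ]; simp
    have hJX : μ.map (fun ω => (X ω, Z ω)) = W.withDensity D := by
      rw [hdecX, hσ, add_zero]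
    have hJT : μ.map (fun ω => (T (X ω), Z ω)) = W'.withDensity G := by
      rw [hdecT, hσT0, add_zero]
    have hGm : Measurable G := Kernel.measurable_rnDeriv _ _
    have hW'map : W' = W.map (Prod.map T id) := by
      rw [hW'def, hWdef, hν'def, ← Measure.map_id (μ := PZ)]
      rw [Measure.map_prod_map _ _ hTm measurable_id]
      rw [Measure.map_id]
    have hDG : D = fun a => G (Prod.map T id a) := rfl
    have hJTmap : μ.map (fun ω => (T (X ω), Z ω))
        = (W.withDensity (fun a => G (Prod.map T id a))).map (Prod.map T id) := by
      rw [← hDG, ← hJX, hmapJoint]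
    rw [hJTmap, hJX, hW'map, hDG]
    exact klDiv_map_withDensity W (hTm.prodMap measurable_id) hGm
  · -- singular case : both sides are ⊤
    have hσT : σT ≠ 0 := by
      intro h0
      apply hσ
      apply Measure.measure_univ_eq_zero.mp
      rw [hmass, h0]
      simp
    rw [klDiv_eq_top_of_not_ac (not_absolutelyContinuous_of_add hdecT hsingT hσT),
      klDiv_eq_top_of_not_ac (not_absolutelyContinuous_of_add hdecX hsingX hσ)]
end

section
/- Consider the distance-2 tree metric: for leaves w_i, w_j of a finite rooted tree, let d_tree(w_i, w_j) be the number of edges on the path between them. Then d_tree is a metric on the leaf set, and moreover √d_tree is also a metric (tree distances are of negative type), so any finite tree metric with the square-root transform embeds isometrically into Euclidean space. -/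
open SimpleGraph

section Aux

variable {V : Type*} [DecidableEq V] {G : SimpleGraph V}

/-- The unique path between two vertices of a tree, as a walk. -/
noncomputable def treePath (hG : G.IsTree) (u v : V) : G.Walk u v :=
  (hG.existsUnique_path u v).exists.choose

lemma treePath_isPath (hG : G.IsTree) (u v : V) : (treePath hG u v).IsPath :=
  (hG.existsUnique_path u v).exists.choose_spec

lemma treePath_eq (hG : G.IsTree) {u v : V} (p : G.Walk u v) (hp : p.IsPath) :
    p = treePath hG u v :=
  ((hG.existsUnique_path u v).unique hp (treePath_isPath hG u v))

lemma treePath_length (hG : G.IsTree) (u v : V) :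
    (treePath hG u v).length = G.dist u v := by
  obtain ⟨p, hp, hlen⟩ := hG.isConnected.exists_path_of_dist u v
  rw [← hlen, treePath_eq hG p hp]

/-- Invariant for walks in a graph with one edge deleted. -/
lemma reach_side_aux {a b : V} : ∀ {x y : V} (_ : G.Walk x y),
    (G.deleteEdges {s(a, b)}).Reachable x y ∨
      ((G.deleteEdges {s(a, b)}).Reachable x a ∧ (G.deleteEdges {s(a, b)}).Reachable y b) ∨
      ((G.deleteEdges {s(a, b)}).Reachable x b ∧ (G.deleteEdges {s(a, b)}).Reachable y a) := by
  intro x y w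
  induction w with
  | nil => exact Or.inl (Reachable.refl _)
  | @cons x m y h p ih =>
    by_cases he : s(x, m) = s(a, b)
    · rw [Sym2.eq_iff] at he
      rcases he with ⟨rfl, rfl⟩ | ⟨rfl, rfl⟩
      · rcases ih with h1 | ⟨h1, h2⟩ | ⟨h1, h2⟩
        · exact Or.inr (Or.inl ⟨Reachable.refl _, h1.symm⟩)
        · exact Or.inr (Or.inl ⟨Reachable.refl _, h2⟩)
        · exact Or.inl (h2.symm.trans (Reachable.refl _))
      · rcases ih with h1 | ⟨h1, h2⟩ | ⟨h1, h2⟩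
        · exact Or.inr (Or.inr ⟨Reachable.refl _, h1.symm⟩)
        · exact Or.inl h2.symm
        · exact Or.inr (Or.inr ⟨Reachable.refl _, h2⟩)
    · have hadj : (G.deleteEdges {s(a, b)}).Adj x m := by
        rw [deleteEdges_adj]
        exact ⟨h, by simpa using he⟩
      rcases ih with h1 | ⟨h1, h2⟩ | ⟨h1, h2⟩
      · exact Or.inl (hadj.reachable.trans h1)
      · exact Or.inr (Or.inl ⟨hadj.reachable.trans h1, h2⟩)
      · exact Or.inr (Or.inr ⟨hadj.reachable.trans h1, h2⟩)

/-- In any graph, any vertex with a walk to `a` reaches, after deleting the edge `s(a,b)`,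
either `a` or `b`. -/
lemma reach_side {a b v : V} (w : G.Walk v a) :
    (G.deleteEdges {s(a, b)}).Reachable v a ∨ (G.deleteEdges {s(a, b)}).Reachable v b := by
  rcases reach_side_aux w with h1 | ⟨h1, h2⟩ | ⟨h1, h2⟩
  · exact Or.inl h1
  · exact Or.inl h1
  · exact Or.inr h1

/-- In a tree, an edge lies on the unique path between `u` and `v` iff `u` and `v`
become unreachable after deleting the edge. -/
lemma edge_mem_treePath_iff (hG : G.IsTree) {e : Sym2 V} (he : e ∈ G.edgeSet) (u v : V) :
    e ∈ (treePath hG u v).edges ↔ ¬ (G.deleteEdges {e}).Reachable u v := by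
  constructor
  · intro hmem hr
    obtain ⟨w⟩ := hr
    have hle : G.deleteEdges {e} ≤ G := fun x y h => (deleteEdges_adj.mp h).1
    let w' : G.Walk u v := w.map (Hom.ofLE hle)
    have hsub : ∀ f ∈ w'.edges, f ∈ (G.deleteEdges {e}).edgeSet := by
      intro f hf
      simp only [w', Walk.edges_map] at hf
      obtain ⟨g, hg, rfl⟩ := List.mem_map.mp hf
      have hid : Sym2.map (Hom.ofLE hle) g = g := by
        induction g using Sym2.ind with
        | _ x y => rfl
      rw [hid]
      exact w.edges_subset_edgeSet hg
    have hpath := treePath_eq hG w'.bypass w'.bypass_isPath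
    have hmem' : e ∈ w'.edges := by
      rw [← hpath] at hmem
      exact w'.edges_bypass_subset hmem
    have h2 := hsub e hmem'
    rw [edgeSet_deleteEdges] at h2
    exact h2.2 rfl
  · intro hnr
    by_contra hne
    exact hnr ⟨(treePath hG u v).toDeleteEdges {e} (by
      intro f hf hfe
      rw [Set.mem_singleton_iff] at hfe
      exact hne (hfe ▸ hf))⟩

/-- XOR characterization: membership of an edge in the path `u–v` is the XOR of its
memberships in the paths `r–u` and `r–v`. -/
lemma edge_mem_xor (hG : G.IsTree) (r u v : V) (e : Sym2 V) :
    (e ∈ (treePath hG u v).edges ↔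
      ¬ (e ∈ (treePath hG r u).edges ↔ e ∈ (treePath hG r v).edges)) := by
  by_cases he : e ∈ G.edgeSet
  · induction e with
    | _ a b =>
      have key : ∀ x y : V, ((G.deleteEdges {s(a,b)}).Reachable x y ↔
          ((G.deleteEdges {s(a,b)}).Reachable x a ↔ (G.deleteEdges {s(a,b)}).Reachable y a)) := by
        intro x y
        constructor
        · intro h
          exact ⟨fun h2 => h.symm.trans h2, fun h2 => h.trans h2⟩
        · intro h
          by_cases hx : (G.deleteEdges {s(a,b)}).Reachable x a
          · exact hx.trans (h.mp hx).symm
          · obtain ⟨wx⟩ := hG.isConnected.preconnected x a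
            obtain ⟨wy⟩ := hG.isConnected.preconnected y a
            have hxb : (G.deleteEdges {s(a,b)}).Reachable x b := by
              rcases reach_side wx with h1 | h1
              · exact absurd h1 hx
              · exact h1
            have hyb : (G.deleteEdges {s(a,b)}).Reachable y b := by
              rcases reach_side wy with h1 | h1
              · exact absurd h1 (fun hy => hx (h.mpr hy))
              · exact h1
            exact hxb.trans hyb.symm
      rw [edge_mem_treePath_iff hG he, edge_mem_treePath_iff hG he,
        edge_mem_treePath_iff hG he, key u v, key r u, key r v]
      tauto
  · have h1 : e ∉ (treePath hG u v).edges := fun h =>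
      he ((treePath hG u v).edges_subset_edgeSet h)
    have h2 : e ∉ (treePath hG r u).edges := fun h =>
      he ((treePath hG r u).edges_subset_edgeSet h)
    have h3 : e ∉ (treePath hG r v).edges := fun h =>
      he ((treePath hG r v).edges_subset_edgeSet h)
    tauto

end Aux

/-- **Tree metrics are of negative type and embed (after a square root) into Euclidean
space.**  Let `T` be a finite tree with leaf set `L`, and let `d_tree` be the number of
edges on the path between two leaves (the graph distance).  Then:
(a) `d_tree` is a metric on `L` (zero iff equal, symmetric, triangle inequality);
(b) `√d_tree` also satisfies the triangle inequality on `L`;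
(c) there is a map `f : L → ℝ^N` with `‖f(u) − f(v)‖² = d_tree(u, v)` for all leaves
`u, v`, i.e. the structural-probe objective is achievable in principle. -/
theorem tree_metric_negative_type
    {V : Type*} [Fintype V] [DecidableEq V]
    (G : SimpleGraph V) [DecidableRel G.Adj] (hG : G.IsTree)
    (L : Set V) (hL : L = {v | G.degree v = 1}) :
    (∀ u ∈ L, ∀ v ∈ L,
        (G.dist u v = 0 ↔ u = v) ∧ G.dist u v = G.dist v u
          ∧ ∀ w ∈ L, G.dist u w ≤ G.dist u v + G.dist v w)
      ∧ (∀ u ∈ L, ∀ v ∈ L, ∀ w ∈ L,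
          Real.sqrt (G.dist u w) ≤ Real.sqrt (G.dist u v) + Real.sqrt (G.dist v w))
      ∧ (∃ (N : ℕ) (f : V → EuclideanSpace ℝ (Fin N)),
          ∀ u ∈ L, ∀ v ∈ L, ‖f u - f v‖ ^ 2 = (G.dist u v : ℝ)) := by
  classical
  have hconn := hG.isConnected
  refine ⟨?_, ?_, ?_⟩
  · intro u _ v _
    exact ⟨hconn.dist_eq_zero_iff, dist_comm, fun w _ => hconn.dist_triangle⟩
  · intro u _ v _ w _
    have htri : (G.dist u w : ℝ) ≤ (G.dist u v : ℝ) + (G.dist v w : ℝ) := by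
      exact_mod_cast hconn.dist_triangle
    refine (Real.sqrt_le_sqrt htri).trans ?_
    have ha : (0:ℝ) ≤ (G.dist u v : ℝ) := Nat.cast_nonneg _
    have hb : (0:ℝ) ≤ (G.dist v w : ℝ) := Nat.cast_nonneg _
    nlinarith [Real.sq_sqrt ha, Real.sq_sqrt hb, Real.sq_sqrt (add_nonneg ha hb),
      Real.sqrt_nonneg ((G.dist u v : ℝ)), Real.sqrt_nonneg ((G.dist v w : ℝ)),
      Real.sqrt_nonneg ((G.dist u v : ℝ) + (G.dist v w : ℝ)),
      mul_nonneg (Real.sqrt_nonneg ((G.dist u v : ℝ))) (Real.sqrt_nonneg ((G.dist v w : ℝ))),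
      sq_nonneg (Real.sqrt (G.dist u v) + Real.sqrt (G.dist v w)
        - Real.sqrt ((G.dist u v : ℝ) + (G.dist v w : ℝ)))]
  · obtain ⟨r⟩ := hconn.nonempty
    set n := Fintype.card (Sym2 V) with hn
    let eqv : Fin n ≃ Sym2 V := (Fintype.equivFin (Sym2 V)).symm
    let f : V → EuclideanSpace ℝ (Fin n) :=
      fun v => WithLp.toLp 2 (fun i => if eqv i ∈ (treePath hG r v).edges then (1:ℝ) else 0)
    refine ⟨n, f, ?_⟩
    intro u _ v _
    have hnorm : ‖f u - f v‖ ^ 2 = ∑ i, (f u i - f v i) ^ 2 := by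
      rw [EuclideanSpace.norm_eq, Real.sq_sqrt (by positivity)]
      congr 1
      ext i
      rw [Real.norm_eq_abs, sq_abs]
      rfl
    rw [hnorm]
    have hterm : ∀ e : Sym2 V,
        ((if e ∈ (treePath hG r u).edges then (1:ℝ) else 0) -
          (if e ∈ (treePath hG r v).edges then (1:ℝ) else 0)) ^ 2
        = if e ∈ (treePath hG u v).edges then (1:ℝ) else 0 := by
      intro e
      have hx := edge_mem_xor hG r u v e
      by_cases h1 : e ∈ (treePath hG r u).edges <;>
        by_cases h2 : e ∈ (treePath hG r v).edges
      · have h3 : e ∉ (treePath hG u v).edges := by tauto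
        rw [if_pos h1, if_pos h2, if_neg h3]; ring
      · have h3 : e ∈ (treePath hG u v).edges := by tauto
        rw [if_pos h1, if_neg h2, if_pos h3]; ring
      · have h3 : e ∈ (treePath hG u v).edges := by tauto
        rw [if_neg h1, if_pos h2, if_pos h3]; ring
      · have h3 : e ∉ (treePath hG u v).edges := by tauto
        rw [if_neg h1, if_neg h2, if_neg h3]; ring
    calc ∑ i, (f u i - f v i) ^ 2
        = ∑ e : Sym2 V, ((if e ∈ (treePath hG r u).edges then (1:ℝ) else 0) -
            (if e ∈ (treePath hG r v).edges then (1:ℝ) else 0)) ^ 2 := by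
          rw [← Equiv.sum_comp eqv]
      _ = ∑ e : Sym2 V, if e ∈ (treePath hG u v).edges then (1:ℝ) else 0 := by
          exact Finset.sum_congr rfl fun e _ => hterm e
      _ = ((Finset.univ.filter (fun e => e ∈ (treePath hG u v).edges)).card : ℝ) := by
          rw [Finset.sum_boole]
      _ = (G.dist u v : ℝ) := by
          have hfil : Finset.univ.filter (fun e => e ∈ (treePath hG u v).edges)
              = (treePath hG u v).edges.toFinset := by
            ext e
            simp [List.mem_toFinset]
          rw [hfil, List.toFinset_card_of_nodup (treePath_isPath hG u v).edges_nodup,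
            Walk.length_edges, treePath_length]
end
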